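/- arXiv:1701.06844 — 2 statements merged into one kernel-verified Lean document; each statement's English description precedes it below -/
import Mathlib

section
/- Let F be a field of characteristic 0, q ≥ 1, t = 2^q. Let P(t) ⊆ M_{2t}(F) be the subspace of block matrices [[A, B],[C, −Aᵀ]] with A, B, C t×t matrices, trace A = 0, Bᵀ = B, Cᵀ = −C. Then P(t) is the internal direct sum of the following one-dimensional subspaces, indexed by the group G = ZMod 2 × (ZMod 2 × ZMod 2)^q: for each g ≠ 0 in (ZMod 2 × ZMod 2)^q, the span of the block-diagonal matrix diag(c_g, −c_gᵀ); for each g with c_gᵀ = c_g, the span of [[0, c_g],[0, 0]]; and for each g with c_gᵀ = −c_g, the span of [[0, 0],[c_g, 0]]. In particular dim P(t) = 2t² − 1. -/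
open Matrix

def sigmaP (F : Type*) [Field F] (u : ZMod 2 × ZMod 2) : Matrix (Fin 2) (Fin 2) F :=
  if u = (0, 0) then !![1, 0; 0, 1]
  else if u = (1, 0) then !![1, 0; 0, -1]
  else if u = (0, 1) then !![0, 1; 1, 0]
  else !![0, 1; -1, 0]

def pauliKron (F : Type*) [Field F] : {q : ℕ} → (Fin q → ZMod 2 × ZMod 2) →
    Matrix (Fin (2 ^ q)) (Fin (2 ^ q)) F
  | 0, _ => 1
  | q + 1, g =>
      Matrix.reindex (finProdFinEquiv.trans (finCongr (pow_succ 2 q).symm))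
        (finProdFinEquiv.trans (finCongr (pow_succ 2 q).symm))
        (Matrix.kroneckerMap (· * ·) (pauliKron F (fun i => g i.castSucc))
          (sigmaP F (g (Fin.last q))))


/-- The Lie superalgebra `P(t)` realised as the subspace of `2t×2t` block matrices
`[[A, B], [C, −Aᵀ]]` with `trace A = 0`, `Bᵀ = B`, `Cᵀ = −C`. -/
def Psubmodule (F : Type*) [Field F] (t : ℕ) :
    Submodule F (Matrix (Fin t ⊕ Fin t) (Fin t ⊕ Fin t) F) where
  carrier := {M | Matrix.trace M.toBlocks₁₁ = 0 ∧ (M.toBlocks₁₂)ᵀ = M.toBlocks₁₂ ∧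
    (M.toBlocks₂₁)ᵀ = -M.toBlocks₂₁ ∧ M.toBlocks₂₂ = -(M.toBlocks₁₁)ᵀ}
  zero_mem' := by
    refine ⟨?_, ?_, ?_, ?_⟩
    · simp [Matrix.toBlocks₁₁, Matrix.trace, Matrix.diag]
    · ext i j; simp [Matrix.toBlocks₁₂]
    · ext i j; simp [Matrix.toBlocks₂₁]
    · ext i j; simp [Matrix.toBlocks₂₂, Matrix.toBlocks₁₁]
  add_mem' := by
    intro a b ha hb
    obtain ⟨h1, h2, h3, h4⟩ := ha
    obtain ⟨k1, k2, k3, k4⟩ := hb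
    have e11 : (a + b).toBlocks₁₁ = a.toBlocks₁₁ + b.toBlocks₁₁ := rfl
    have e12 : (a + b).toBlocks₁₂ = a.toBlocks₁₂ + b.toBlocks₁₂ := rfl
    have e21 : (a + b).toBlocks₂₁ = a.toBlocks₂₁ + b.toBlocks₂₁ := rfl
    have e22 : (a + b).toBlocks₂₂ = a.toBlocks₂₂ + b.toBlocks₂₂ := rfl
    refine ⟨?_, ?_, ?_, ?_⟩
    · rw [e11, Matrix.trace_add, h1, k1, add_zero]
    · rw [e12, Matrix.transpose_add, h2, k2]
    · rw [e21, Matrix.transpose_add, h3, k3, neg_add]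
    · rw [e22, e11, h4, k4, Matrix.transpose_add, neg_add]
  smul_mem' := by
    intro c a ha
    obtain ⟨h1, h2, h3, h4⟩ := ha
    have e11 : (c • a).toBlocks₁₁ = c • a.toBlocks₁₁ := rfl
    have e12 : (c • a).toBlocks₁₂ = c • a.toBlocks₁₂ := rfl
    have e21 : (c • a).toBlocks₂₁ = c • a.toBlocks₂₁ := rfl
    have e22 : (c • a).toBlocks₂₂ = c • a.toBlocks₂₂ := rfl
    refine ⟨?_, ?_, ?_, ?_⟩
    · rw [e11, Matrix.trace_smul, h1, smul_zero]
    · rw [e12, Matrix.transpose_smul, h2]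
    · rw [e21, Matrix.transpose_smul, h3, smul_neg]
    · rw [e22, e11, h4, Matrix.transpose_smul, smul_neg]

open scoped Classical in
/-- The homogeneous components of the Pauli grading on `P(t)`, indexed by the group
`G = ZMod 2 × (ZMod 2 × ZMod 2)^q`. -/
noncomputable def Pcomponent (F : Type*) [Field F] (q : ℕ)
    (e : ZMod 2 × (Fin q → ZMod 2 × ZMod 2)) :
    Submodule F (Matrix (Fin (2 ^ q) ⊕ Fin (2 ^ q)) (Fin (2 ^ q) ⊕ Fin (2 ^ q)) F) :=
  if e.1 = 0 then
    (if e.2 ≠ 0 then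
      Submodule.span F
        {Matrix.fromBlocks (pauliKron F e.2) 0 0 (-(pauliKron F e.2)ᵀ)}
    else ⊥)
  else
    if (pauliKron F e.2)ᵀ = pauliKron F e.2 then
      Submodule.span F {Matrix.fromBlocks 0 (pauliKron F e.2) 0 0}
    else if (pauliKron F e.2)ᵀ = -pauliKron F e.2 then
      Submodule.span F {Matrix.fromBlocks 0 0 (pauliKron F e.2) 0}
    else ⊥


section PauliGradingAux

variable (F : Type*) [Field F]

lemma sigma_mul (u v : ZMod 2 × ZMod 2) :
    ∃ ε : F, (ε = 1 ∨ ε = -1) ∧ sigmaP F u * sigmaP F v = ε • sigmaP F (u + v) := by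
  fin_cases u <;> fin_cases v <;>
  first
  | (refine ⟨1, Or.inl rfl, ?_⟩
     ext i j; fin_cases i <;> fin_cases j <;>
       simp (config := { decide := true }) [sigmaP, Matrix.mul_apply, Fin.sum_univ_two]; done)
  | (refine ⟨-1, Or.inr rfl, ?_⟩
     ext i j; fin_cases i <;> fin_cases j <;>
       simp (config := { decide := true }) [sigmaP, Matrix.mul_apply, Fin.sum_univ_two]; done)

lemma sigma_transpose (u : ZMod 2 × ZMod 2) :
    ∃ s : F, (s = 1 ∨ s = -1) ∧ (sigmaP F u)ᵀ = s • sigmaP F u := by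
  fin_cases u <;>
  first
  | (refine ⟨1, Or.inl rfl, ?_⟩
     ext i j; fin_cases i <;> fin_cases j <;>
       simp (config := { decide := true }) [sigmaP, Matrix.transpose_apply]; done)
  | (refine ⟨-1, Or.inr rfl, ?_⟩
     ext i j; fin_cases i <;> fin_cases j <;>
       simp (config := { decide := true }) [sigmaP, Matrix.transpose_apply]; done)

lemma sigma_trace (u : ZMod 2 × ZMod 2) :
    Matrix.trace (sigmaP F u) = if u = 0 then 2 else 0 := by
  fin_cases u <;>
    simp (config := { decide := true }) [sigmaP, Matrix.trace_fin_two] <;> norm_num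

lemma pauli_succ {q : ℕ} (g : Fin (q+1) → ZMod 2 × ZMod 2) :
    pauliKron F g = Matrix.reindex (finProdFinEquiv.trans (finCongr (pow_succ 2 q).symm))
        (finProdFinEquiv.trans (finCongr (pow_succ 2 q).symm))
        (Matrix.kroneckerMap (· * ·) (pauliKron F (fun i => g i.castSucc))
          (sigmaP F (g (Fin.last q)))) := rfl

lemma trace_reindex' {n m : Type*} [Fintype n] [Fintype m] [DecidableEq n] [DecidableEq m]
    (e : n ≃ m) (M : Matrix n n F) : Matrix.trace (Matrix.reindex e e M) = Matrix.trace M := by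
  simp [Matrix.trace, Matrix.reindex_apply, Matrix.diag, Matrix.submatrix_apply]
  exact Fintype.sum_equiv e.symm _ _ (fun i => rfl)

lemma reindex_mul {n m : Type*} [Fintype n] [Fintype m] [DecidableEq n] [DecidableEq m]
    (e : n ≃ m) (A B : Matrix n n F) :
    Matrix.reindex e e A * Matrix.reindex e e B = Matrix.reindex e e (A * B) := by
  simp only [Matrix.reindex_apply]
  exact Matrix.submatrix_mul_equiv A B e.symm e.symm e.symm

lemma pauli_mul : ∀ {q : ℕ} (g h : Fin q → ZMod 2 × ZMod 2),
    ∃ ε : F, (ε = 1 ∨ ε = -1) ∧ pauliKron F g * pauliKron F h = ε • pauliKron F (g + h) := by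
  intro q
  induction q with
  | zero => exact fun g h => ⟨1, Or.inl rfl, by simp [pauliKron]⟩
  | succ q ih =>
    intro g h
    obtain ⟨ε, hε, hmul⟩ := ih (fun i => g i.castSucc) (fun i => h i.castSucc)
    obtain ⟨δ, hδ, hsig⟩ := sigma_mul F (g (Fin.last q)) (h (Fin.last q))
    refine ⟨ε * δ, ?_, ?_⟩
    · rcases hε with rfl | rfl <;> rcases hδ with rfl | rfl <;> simp
    · rw [pauli_succ, pauli_succ, pauli_succ, reindex_mul, ← Matrix.mul_kronecker_mul, hmul, hsig]
      have : (fun i : Fin q => (g + h) i.castSucc) = (fun i => g i.castSucc) + (fun i => h i.castSucc) :=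
        rfl
      rw [this]
      congr 1
      rw [Matrix.smul_kronecker, Matrix.kronecker_smul, smul_smul]
      rfl

lemma pauli_trace : ∀ {q : ℕ} (g : Fin q → ZMod 2 × ZMod 2),
    Matrix.trace (pauliKron F g) = if g = 0 then (2 ^ q : F) else 0 := by
  intro q
  induction q with
  | zero =>
    intro g
    simp [pauliKron, Subsingleton.elim g 0]
  | succ q ih =>
    intro g
    rw [pauli_succ, trace_reindex', Matrix.trace_kronecker, ih, sigma_trace]
    have hiff : g = 0 ↔ ((fun i : Fin q => g i.castSucc) = 0 ∧ g (Fin.last q) = 0) := by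
      constructor
      · rintro rfl; exact ⟨rfl, rfl⟩
      · rintro ⟨h1, h2⟩
        funext i
        induction i using Fin.lastCases with
        | last => exact h2
        | cast j => exact congrFun h1 j
    by_cases h1 : (fun i : Fin q => g i.castSucc) = 0 <;> by_cases h2 : g (Fin.last q) = 0 <;>
      simp [h1, h2, hiff, pow_succ] <;> ring

lemma pauli_transpose : ∀ {q : ℕ} (g : Fin q → ZMod 2 × ZMod 2),
    ∃ s : F, (s = 1 ∨ s = -1) ∧ (pauliKron F g)ᵀ = s • pauliKron F g := by
  intro q
  induction q with
  | zero => exact fun g => ⟨1, Or.inl rfl, by simp [pauliKron]⟩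
  | succ q ih =>
    intro g
    obtain ⟨s, hs, hts⟩ := ih (fun i => g i.castSucc)
    obtain ⟨r, hr, htr⟩ := sigma_transpose F (g (Fin.last q))
    refine ⟨s * r, ?_, ?_⟩
    · rcases hs with rfl | rfl <;> rcases hr with rfl | rfl <;> simp
    · rw [pauli_succ, Matrix.transpose_reindex, ← Matrix.kroneckerMap_transpose, hts, htr,
        Matrix.smul_kronecker, Matrix.kronecker_smul, smul_smul]
      rfl

variable [CharZero F] {q : ℕ}

lemma zmod_add_self (g : Fin q → ZMod 2 × ZMod 2) : g + g = 0 := by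
  funext i
  have : ∀ x : ZMod 2 × ZMod 2, x + x = 0 := by decide
  exact this (g i)

lemma zmod_add_eq_zero_iff (g h : Fin q → ZMod 2 × ZMod 2) : g + h = 0 ↔ g = h := by
  constructor
  · intro hgh
    have := congrArg (· + h) hgh
    simpa [add_assoc, zmod_add_self] using this
  · rintro rfl; exact zmod_add_self g

lemma trace_pauli_mul_ne (g h : Fin q → ZMod 2 × ZMod 2) (hgh : g ≠ h) :
    Matrix.trace (pauliKron F g * pauliKron F h) = 0 := by
  obtain ⟨ε, -, hm⟩ := pauli_mul F g h
  rw [hm, Matrix.trace_smul, pauli_trace, if_neg, smul_zero]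
  exact fun h0 => hgh ((zmod_add_eq_zero_iff g h).mp h0)

lemma trace_pauli_mul_self (g : Fin q → ZMod 2 × ZMod 2) :
    Matrix.trace (pauliKron F g * pauliKron F g) ≠ 0 := by
  obtain ⟨ε, hε, hm⟩ := pauli_mul F g g
  rw [hm, Matrix.trace_smul, pauli_trace, if_pos (zmod_add_self g)]
  rcases hε with rfl | rfl <;> simp <;> positivity

lemma pauli_linearIndependent :
    LinearIndependent F (pauliKron F (q := q)) := by
  rw [Fintype.linearIndependent_iff]
  intro a hsum h
  have key := congrArg (fun M => Matrix.trace (M * pauliKron F h)) hsum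
  simp only [Finset.sum_mul, smul_mul_assoc, Matrix.trace_sum, Matrix.trace_smul,
    Matrix.zero_mul, Matrix.trace_zero] at key
  rw [Finset.sum_eq_single h (fun g _ hg => by
      rw [trace_pauli_mul_ne F g h hg, smul_zero]) (by simp)] at key
  have := trace_pauli_mul_self F h
  rcases mul_eq_zero.mp key with h' | h'
  · exact h'
  · exact absurd h' this

lemma pauli_span_top :
    Submodule.span F (Set.range (pauliKron F (q := q))) = ⊤ := by
  apply LinearIndependent.span_eq_top_of_card_eq_finrank (pauli_linearIndependent F)
  rw [Module.finrank_matrix]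
  simp [Fintype.card_fun]
  rw [show (4:ℕ) = 2^2 from rfl, ← pow_mul, mul_comm, pow_mul, sq]

lemma pauli_repr (M : Matrix (Fin (2^q)) (Fin (2^q)) F) :
    ∃ a : (Fin q → ZMod 2 × ZMod 2) → F, ∑ g, a g • pauliKron F g = M := by
  have : M ∈ Submodule.span F (Set.range (pauliKron F (q := q))) := by
    rw [pauli_span_top]; trivial
  exact (Finsupp.mem_span_range_iff_exists_finsupp.mp this).elim
    (fun a ha => ⟨a, by rwa [Finsupp.sum_fintype] at ha; simp⟩)

lemma pauli_coeff_unique (a b : (Fin q → ZMod 2 × ZMod 2) → F)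
    (hab : ∑ g, a g • pauliKron F g = ∑ g, b g • pauliKron F g) : a = b := by
  funext g
  have h0 : ∑ h, (a h - b h) • pauliKron F h = 0 := by
    simp [sub_smul, Finset.sum_sub_distrib, hab]
  have := Fintype.linearIndependent_iff.mp (pauli_linearIndependent F) _ h0 g
  exact sub_eq_zero.mp this

open scoped Classical

/-- symmetric-or-zero dichotomy -/
lemma pauli_sym_or_skew (g : Fin q → ZMod 2 × ZMod 2) :
    (pauliKron F g)ᵀ = pauliKron F g ∨ (pauliKron F g)ᵀ = -pauliKron F g := by
  obtain ⟨s, hs, ht⟩ := pauli_transpose F g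
  rcases hs with rfl | rfl
  · left; simpa using ht
  · right; simpa [neg_smul] using ht

noncomputable def wvec (e : ZMod 2 × (Fin q → ZMod 2 × ZMod 2)) :
    Matrix (Fin (2^q) ⊕ Fin (2^q)) (Fin (2^q) ⊕ Fin (2^q)) F :=
  if e.1 = 0 then fromBlocks (pauliKron F e.2) 0 0 (-(pauliKron F e.2)ᵀ)
  else if (pauliKron F e.2)ᵀ = pauliKron F e.2 then fromBlocks 0 (pauliKron F e.2) 0 0
  else fromBlocks 0 0 (pauliKron F e.2) 0

def T11 : Matrix (Fin (2^q) ⊕ Fin (2^q)) (Fin (2^q) ⊕ Fin (2^q)) F →ₗ[F]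
    Matrix (Fin (2^q)) (Fin (2^q)) F where
  toFun M := M.toBlocks₁₁
  map_add' _ _ := rfl
  map_smul' _ _ := rfl

def T12 : Matrix (Fin (2^q) ⊕ Fin (2^q)) (Fin (2^q) ⊕ Fin (2^q)) F →ₗ[F]
    Matrix (Fin (2^q)) (Fin (2^q)) F where
  toFun M := M.toBlocks₁₂
  map_add' _ _ := rfl
  map_smul' _ _ := rfl

def T21 : Matrix (Fin (2^q) ⊕ Fin (2^q)) (Fin (2^q) ⊕ Fin (2^q)) F →ₗ[F]
    Matrix (Fin (2^q)) (Fin (2^q)) F where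
  toFun M := M.toBlocks₂₁
  map_add' _ _ := rfl
  map_smul' _ _ := rfl

def T22 : Matrix (Fin (2^q) ⊕ Fin (2^q)) (Fin (2^q) ⊕ Fin (2^q)) F →ₗ[F]
    Matrix (Fin (2^q)) (Fin (2^q)) F where
  toFun M := M.toBlocks₂₂
  map_add' _ _ := rfl
  map_smul' _ _ := rfl

lemma zmod2_sum {M : Type*} [AddCommMonoid M] (f : ZMod 2 → M) :
    ∑ x : ZMod 2, f x = f 0 + f 1 := Fin.sum_univ_two f

lemma zmod2_cases (x : ZMod 2) : x = 0 ∨ x = 1 := by revert x; decide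

lemma blocks_ext {M N : Matrix (Fin (2^q) ⊕ Fin (2^q)) (Fin (2^q) ⊕ Fin (2^q)) F}
    (h11 : M.toBlocks₁₁ = N.toBlocks₁₁) (h12 : M.toBlocks₁₂ = N.toBlocks₁₂)
    (h21 : M.toBlocks₂₁ = N.toBlocks₂₁) (h22 : M.toBlocks₂₂ = N.toBlocks₂₂) : M = N := by
  rw [← Matrix.fromBlocks_toBlocks M, ← Matrix.fromBlocks_toBlocks N, h11, h12, h21, h22]

lemma wvec_b11 (e : ZMod 2 × (Fin q → ZMod 2 × ZMod 2)) :
    (wvec F e).toBlocks₁₁ = if e.1 = 0 then pauliKron F e.2 else 0 := by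
  unfold wvec; split_ifs with h1 h2 <;> simp [h1]

lemma wvec_b12 (e : ZMod 2 × (Fin q → ZMod 2 × ZMod 2)) :
    (wvec F e).toBlocks₁₂ =
      if e.1 ≠ 0 ∧ (pauliKron F e.2)ᵀ = pauliKron F e.2 then pauliKron F e.2 else 0 := by
  unfold wvec; split_ifs with h1 h2 <;> simp_all

lemma wvec_b21 (e : ZMod 2 × (Fin q → ZMod 2 × ZMod 2)) :
    (wvec F e).toBlocks₂₁ =
      if e.1 ≠ 0 ∧ ¬((pauliKron F e.2)ᵀ = pauliKron F e.2) then pauliKron F e.2 else 0 := by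
  unfold wvec; split_ifs with h1 h2 <;> simp_all

lemma wvec_li : LinearIndependent F (wvec F (q := q)) := by
  rw [Fintype.linearIndependent_iff]
  intro a hsum e
  have key : ∀ (T : Matrix (Fin (2^q) ⊕ Fin (2^q)) (Fin (2^q) ⊕ Fin (2^q)) F →ₗ[F]
      Matrix (Fin (2^q)) (Fin (2^q)) F), ∑ x, a x • T (wvec F x) = 0 := by
    intro T
    have := congrArg T hsum
    simpa [map_sum] using this
  have h11 := key (T11 F)
  have h12 := key (T12 F)
  have h21 := key (T21 F)
  simp only [show ∀ M, T11 F (q := q) M = M.toBlocks₁₁ from fun _ => rfl,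
    show ∀ M, T12 F (q := q) M = M.toBlocks₁₂ from fun _ => rfl,
    show ∀ M, T21 F (q := q) M = M.toBlocks₂₁ from fun _ => rfl, wvec_b11, wvec_b12, wvec_b21,
    Fintype.sum_prod_type] at h11 h12 h21
  rw [zmod2_sum] at h11 h12 h21
  simp only [if_pos rfl, reduceIte, one_ne_zero, ne_eq, not_false_iff, true_and,
    if_neg (one_ne_zero (α := ZMod 2)), smul_zero, Finset.sum_const_zero, add_zero, zero_add,
    false_and, if_false] at h11 h12 h21
  have ha0 : ∀ g, a (0, g) = 0 :=
    Fintype.linearIndependent_iff.mp (pauli_linearIndependent F) _ h11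
  simp only [not_true, false_and, if_false, smul_zero, Finset.sum_const_zero, zero_add]
    at h12 h21
  have h12' : ∑ g, (if (pauliKron F g)ᵀ = pauliKron F g then a (1, g) else 0) • pauliKron F g
      = 0 := by
    rw [← h12]
    refine Finset.sum_congr rfl fun g _ => ?_
    split_ifs with h <;> simp
  have h21' : ∑ g, (if (pauliKron F g)ᵀ = pauliKron F g then 0 else a (1, g)) • pauliKron F g
      = 0 := by
    rw [← h21]
    refine Finset.sum_congr rfl fun g _ => ?_
    split_ifs with h <;> simp
  have hb := Fintype.linearIndependent_iff.mp (pauli_linearIndependent F) _ h12'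
  have hc := Fintype.linearIndependent_iff.mp (pauli_linearIndependent F) _ h21'
  obtain ⟨x, g⟩ := e
  rcases zmod2_cases x with rfl | rfl
  · exact ha0 g
  · by_cases hsym : (pauliKron F g)ᵀ = pauliKron F g
    · have := hb g; rwa [if_pos hsym] at this
    · have := hc g; rwa [if_neg hsym] at this
lemma wvec_b22 (e : ZMod 2 × (Fin q → ZMod 2 × ZMod 2)) :
    (wvec F e).toBlocks₂₂ = if e.1 = 0 then -(pauliKron F e.2)ᵀ else 0 := by
  unfold wvec; split_ifs with h1 h2 <;> simp_all

@[simp] lemma tb11_add (X Y : Matrix (Fin (2^q) ⊕ Fin (2^q)) (Fin (2^q) ⊕ Fin (2^q)) F) :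
    (X + Y).toBlocks₁₁ = X.toBlocks₁₁ + Y.toBlocks₁₁ := rfl
@[simp] lemma tb12_add (X Y : Matrix (Fin (2^q) ⊕ Fin (2^q)) (Fin (2^q) ⊕ Fin (2^q)) F) :
    (X + Y).toBlocks₁₂ = X.toBlocks₁₂ + Y.toBlocks₁₂ := rfl
@[simp] lemma tb21_add (X Y : Matrix (Fin (2^q) ⊕ Fin (2^q)) (Fin (2^q) ⊕ Fin (2^q)) F) :
    (X + Y).toBlocks₂₁ = X.toBlocks₂₁ + Y.toBlocks₂₁ := rfl
@[simp] lemma tb22_add (X Y : Matrix (Fin (2^q) ⊕ Fin (2^q)) (Fin (2^q) ⊕ Fin (2^q)) F) :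
    (X + Y).toBlocks₂₂ = X.toBlocks₂₂ + Y.toBlocks₂₂ := rfl
@[simp] lemma tb11_smul (r : F) (X : Matrix (Fin (2^q) ⊕ Fin (2^q)) (Fin (2^q) ⊕ Fin (2^q)) F) :
    (r • X).toBlocks₁₁ = r • X.toBlocks₁₁ := rfl
@[simp] lemma tb12_smul (r : F) (X : Matrix (Fin (2^q) ⊕ Fin (2^q)) (Fin (2^q) ⊕ Fin (2^q)) F) :
    (r • X).toBlocks₁₂ = r • X.toBlocks₁₂ := rfl
@[simp] lemma tb21_smul (r : F) (X : Matrix (Fin (2^q) ⊕ Fin (2^q)) (Fin (2^q) ⊕ Fin (2^q)) F) :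
    (r • X).toBlocks₂₁ = r • X.toBlocks₂₁ := rfl
@[simp] lemma tb22_smul (r : F) (X : Matrix (Fin (2^q) ⊕ Fin (2^q)) (Fin (2^q) ⊕ Fin (2^q)) F) :
    (r • X).toBlocks₂₂ = r • X.toBlocks₂₂ := rfl
@[simp] lemma tb11_sum {ι : Type*} (sfin : Finset ι)
    (f : ι → Matrix (Fin (2^q) ⊕ Fin (2^q)) (Fin (2^q) ⊕ Fin (2^q)) F) :
    (∑ i ∈ sfin, f i).toBlocks₁₁ = ∑ i ∈ sfin, (f i).toBlocks₁₁ := map_sum (T11 F) f sfin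
@[simp] lemma tb12_sum {ι : Type*} (sfin : Finset ι)
    (f : ι → Matrix (Fin (2^q) ⊕ Fin (2^q)) (Fin (2^q) ⊕ Fin (2^q)) F) :
    (∑ i ∈ sfin, f i).toBlocks₁₂ = ∑ i ∈ sfin, (f i).toBlocks₁₂ := map_sum (T12 F) f sfin
@[simp] lemma tb21_sum {ι : Type*} (sfin : Finset ι)
    (f : ι → Matrix (Fin (2^q) ⊕ Fin (2^q)) (Fin (2^q) ⊕ Fin (2^q)) F) :
    (∑ i ∈ sfin, f i).toBlocks₂₁ = ∑ i ∈ sfin, (f i).toBlocks₂₁ := map_sum (T21 F) f sfin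
@[simp] lemma tb22_sum {ι : Type*} (sfin : Finset ι)
    (f : ι → Matrix (Fin (2^q) ⊕ Fin (2^q)) (Fin (2^q) ⊕ Fin (2^q)) F) :
    (∑ i ∈ sfin, f i).toBlocks₂₂ = ∑ i ∈ sfin, (f i).toBlocks₂₂ := map_sum (T22 F) f sfin


lemma pauli_ne_zero (g : Fin q → ZMod 2 × ZMod 2) : pauliKron F g ≠ 0 := by
  intro h
  apply trace_pauli_mul_self F g
  rw [h, Matrix.zero_mul, Matrix.trace_zero]

lemma pauli_not_sym_skew (g : Fin q → ZMod 2 × ZMod 2)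
    (hskew : (pauliKron F g)ᵀ = -pauliKron F g) : ¬ (pauliKron F g)ᵀ = pauliKron F g := by
  intro hsym
  apply pauli_ne_zero F g
  have h2 : (2 : F) • pauliKron F g = 0 := by
    rw [two_smul]
    nth_rewrite 1 [← hsym]
    rw [hskew, neg_add_cancel]
  rcases smul_eq_zero.mp h2 with h | h
  · exact absurd h two_ne_zero
  · exact h

lemma Pcomp_bot : Pcomponent F q (0, 0) = ⊥ := by
  unfold Pcomponent
  rw [if_pos rfl, if_neg (by simp)]

lemma Pcomp_eq (e : ZMod 2 × (Fin q → ZMod 2 × ZMod 2)) (he : e ≠ (0, 0)) :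
    Pcomponent F q e = Submodule.span F {wvec F e} := by
  obtain ⟨x, g⟩ := e
  unfold Pcomponent wvec
  rcases zmod2_cases x with rfl | rfl
  · have hg : g ≠ 0 := fun h => he (by rw [h])
    rw [if_pos rfl, if_pos rfl, if_pos (show ((0 : ZMod 2), g).2 ≠ 0 from hg)]
  · rw [if_neg one_ne_zero, if_neg one_ne_zero]
    rcases pauli_sym_or_skew F g with hsym | hskew
    · rw [if_pos hsym, if_pos hsym]
    · have hnsym := pauli_not_sym_skew F g hskew
      rw [if_neg hnsym, if_pos hskew, if_neg hnsym]

lemma Pcomp_le_span (e : ZMod 2 × (Fin q → ZMod 2 × ZMod 2)) :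
    Pcomponent F q e ≤ Submodule.span F {wvec F e} := by
  by_cases he : e = (0, 0)
  · rw [he, Pcomp_bot]; exact bot_le
  · rw [Pcomp_eq F e he]

lemma gen_diag_mem (g : Fin q → ZMod 2 × ZMod 2) (hg : g ≠ 0) :
    Matrix.fromBlocks (pauliKron F g) 0 0 (-(pauliKron F g)ᵀ) ∈ Psubmodule F (2 ^ q) := by
  refine ⟨?_, ?_, ?_, ?_⟩ <;>
    simp [Matrix.toBlocks_fromBlocks₁₁, Matrix.toBlocks_fromBlocks₁₂,
      Matrix.toBlocks_fromBlocks₂₁, Matrix.toBlocks_fromBlocks₂₂, pauli_trace, hg]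

lemma gen_B_mem (g : Fin q → ZMod 2 × ZMod 2) (hsym : (pauliKron F g)ᵀ = pauliKron F g) :
    Matrix.fromBlocks 0 (pauliKron F g) 0 0 ∈ Psubmodule F (2 ^ q) := by
  refine ⟨?_, ?_, ?_, ?_⟩ <;>
    simp [Matrix.toBlocks_fromBlocks₁₁, Matrix.toBlocks_fromBlocks₁₂,
      Matrix.toBlocks_fromBlocks₂₁, Matrix.toBlocks_fromBlocks₂₂, hsym]

lemma gen_C_mem (g : Fin q → ZMod 2 × ZMod 2) (hskew : (pauliKron F g)ᵀ = -pauliKron F g) :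
    Matrix.fromBlocks 0 0 (pauliKron F g) 0 ∈ Psubmodule F (2 ^ q) := by
  refine ⟨?_, ?_, ?_, ?_⟩ <;>
    simp [Matrix.toBlocks_fromBlocks₁₁, Matrix.toBlocks_fromBlocks₁₂,
      Matrix.toBlocks_fromBlocks₂₁, Matrix.toBlocks_fromBlocks₂₂, hskew]

lemma wvec_mem_P (e : ZMod 2 × (Fin q → ZMod 2 × ZMod 2)) (he : e ≠ (0, 0)) :
    wvec F e ∈ Psubmodule F (2 ^ q) := by
  obtain ⟨x, g⟩ := e
  unfold wvec
  rcases zmod2_cases x with rfl | rfl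
  · have hg : g ≠ 0 := fun h => he (by rw [h])
    rw [if_pos rfl]
    exact gen_diag_mem F g hg
  · rw [if_neg one_ne_zero]
    rcases pauli_sym_or_skew F g with hsym | hskew
    · rw [if_pos hsym]; exact gen_B_mem F g hsym
    · rw [if_neg (pauli_not_sym_skew F g hskew)]; exact gen_C_mem F g hskew

lemma Pcomp_le_P (e : ZMod 2 × (Fin q → ZMod 2 × ZMod 2)) :
    Pcomponent F q e ≤ Psubmodule F (2 ^ q) := by
  by_cases he : e = (0, 0)
  · rw [he, Pcomp_bot]; exact bot_le
  · rw [Pcomp_eq F e he, Submodule.span_le, Set.singleton_subset_iff]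
    exact wvec_mem_P F e he

lemma wvec_mem_comp (e : ZMod 2 × (Fin q → ZMod 2 × ZMod 2)) (he : e ≠ (0, 0)) :
    wvec F e ∈ Pcomponent F q e := by
  rw [Pcomp_eq F e he]
  exact Submodule.mem_span_singleton_self _

lemma P_le_iSup :
    Psubmodule F (2 ^ q) ≤ ⨆ e, Pcomponent F q e := by
  intro M hM
  obtain ⟨h1, h2, h3, h4⟩ := hM
  obtain ⟨a, ha⟩ := pauli_repr F M.toBlocks₁₁
  obtain ⟨b, hb⟩ := pauli_repr F M.toBlocks₁₂
  obtain ⟨c, hc⟩ := pauli_repr F M.toBlocks₂₁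
  choose s hs hts using fun g : Fin q → ZMod 2 × ZMod 2 => pauli_transpose F g
  -- a 0 = 0
  have ha0 : a 0 = 0 := by
    have htr : Matrix.trace M.toBlocks₁₁ = a 0 * 2 ^ q := by
      rw [← ha, Matrix.trace_sum]
      rw [Finset.sum_eq_single 0 (fun g _ hg => by
        rw [Matrix.trace_smul, pauli_trace, if_neg hg, smul_zero]) (by simp)]
      rw [Matrix.trace_smul, pauli_trace, if_pos rfl, smul_eq_mul]
    rw [h1] at htr
    have h2q : (2 : F) ^ q ≠ 0 := pow_ne_zero q two_ne_zero
    rcases mul_eq_zero.mp htr.symm with h | h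
    · exact h
    · exact absurd h h2q
  -- symmetric coefficients
  have hbsym : ∀ g, ¬ (pauliKron F g)ᵀ = pauliKron F g → b g = 0 := by
    intro g hg
    have hBt : ∑ u, (b u * s u) • pauliKron F u = ∑ u, b u • pauliKron F u := by
      calc ∑ u, (b u * s u) • pauliKron F u
          = (∑ u, b u • pauliKron F u)ᵀ := by
            rw [Matrix.transpose_sum]
            exact Finset.sum_congr rfl fun u _ => by
              rw [Matrix.transpose_smul, hts u, smul_smul]
        _ = ∑ u, b u • pauliKron F u := by rw [hb, h2]
    have := congrFun (pauli_coeff_unique F _ _ hBt) g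
    rcases hs g with hsg | hsg
    · exact absurd (by rw [hts g, hsg, one_smul]) hg
    · rw [hsg, mul_neg_one] at this
      linear_combination (-1/2 : F) * this
  have hcskew : ∀ g, (pauliKron F g)ᵀ = pauliKron F g → c g = 0 := by
    intro g hg
    have hCt : ∑ u, (c u * s u) • pauliKron F u = ∑ u, (-c u) • pauliKron F u := by
      calc ∑ u, (c u * s u) • pauliKron F u
          = (∑ u, c u • pauliKron F u)ᵀ := by
            rw [Matrix.transpose_sum]
            exact Finset.sum_congr rfl fun u _ => by
              rw [Matrix.transpose_smul, hts u, smul_smul]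
        _ = ∑ u, (-c u) • pauliKron F u := by
            rw [hc, h3, ← hc, ← Finset.sum_neg_distrib]
            exact Finset.sum_congr rfl fun u _ => by rw [neg_smul]
    have := congrFun (pauli_coeff_unique F _ _ hCt) g
    have hsg1 : s g = 1 := by
      rcases hs g with hsg | hsg
      · exact hsg
      · exfalso
        exact pauli_not_sym_skew F g (by rw [hts g, hsg, neg_smul, one_smul]) hg
    rw [hsg1, mul_one] at this
    linear_combination (1/2 : F) * this
  -- decompose M
  have hM_eq : M = (∑ g, a g • wvec F (0, g)) + (∑ g, b g • Matrix.fromBlocks 0 (pauliKron F g) 0 0)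
      + (∑ g, c g • Matrix.fromBlocks 0 0 (pauliKron F g) 0) := by
    apply blocks_ext
    · simp [wvec_b11, ha]
    · simp [wvec_b12, hb]
    · simp [wvec_b21, hc]
    · rw [h4, ← ha]
      simp [wvec_b22, Matrix.transpose_sum, Matrix.transpose_smul, smul_neg,
        Finset.sum_neg_distrib]
  rw [hM_eq]
  refine Submodule.add_mem _ (Submodule.add_mem _ ?_ ?_) ?_
  · refine Submodule.sum_mem _ fun g _ => ?_
    by_cases hg : g = 0
    · subst hg; rw [ha0, zero_smul]; exact Submodule.zero_mem _
    · refine Submodule.smul_mem _ _ (Submodule.mem_iSup_of_mem (0, g) ?_)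
      exact wvec_mem_comp F (0, g) (by simp [Prod.ext_iff, hg])
  · refine Submodule.sum_mem _ fun g _ => ?_
    by_cases hsym : (pauliKron F g)ᵀ = pauliKron F g
    · have hw : Matrix.fromBlocks 0 (pauliKron F g) 0 0 = wvec F (1, g) := by
        unfold wvec; rw [if_neg one_ne_zero, if_pos hsym]
      rw [hw]
      refine Submodule.smul_mem _ _ (Submodule.mem_iSup_of_mem (1, g) ?_)
      exact wvec_mem_comp F (1, g) (by simp [Prod.ext_iff])
    · rw [hbsym g hsym, zero_smul]; exact Submodule.zero_mem _
  · refine Submodule.sum_mem _ fun g _ => ?_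
    by_cases hsym : (pauliKron F g)ᵀ = pauliKron F g
    · rw [hcskew g hsym, zero_smul]; exact Submodule.zero_mem _
    · have hw : Matrix.fromBlocks 0 0 (pauliKron F g) 0 = wvec F (1, g) := by
        unfold wvec; rw [if_neg one_ne_zero, if_neg hsym]
      rw [hw]
      refine Submodule.smul_mem _ _ (Submodule.mem_iSup_of_mem (1, g) ?_)
      exact wvec_mem_comp F (1, g) (by simp [Prod.ext_iff])


theorem Pt_pauli_grading_aux (hq : 1 ≤ q) :
    iSupIndep (Pcomponent F q) ∧
    (⨆ e, Pcomponent F q e) = Psubmodule F (2 ^ q) ∧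
    (∀ e, Pcomponent F q e ≠ ⊥ → Module.finrank F (Pcomponent F q e) = 1) ∧
    Module.finrank F (Psubmodule F (2 ^ q)) = 2 * (2 ^ q) ^ 2 - 1 := by
  have hspan : Psubmodule F (2 ^ q) =
      Submodule.span F (Set.range
        (wvec F ∘ (Subtype.val : {e : ZMod 2 × (Fin q → ZMod 2 × ZMod 2) // e ≠ (0, 0)} → _)))
      := by
    apply le_antisymm
    · refine le_trans (P_le_iSup F) (iSup_le fun e => ?_)
      by_cases he : e = (0, 0)
      · rw [he, Pcomp_bot]; exact bot_le
      · rw [Pcomp_eq F e he, Submodule.span_le, Set.singleton_subset_iff]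
        exact Submodule.subset_span ⟨⟨e, he⟩, rfl⟩
    · rw [Submodule.span_le]
      rintro _ ⟨e, rfl⟩
      exact wvec_mem_P F e.1 e.2
  refine ⟨?_, ?_, ?_, ?_⟩
  · exact ((wvec_li F).iSupIndep_span_singleton).mono fun e => Pcomp_le_span F e
  · exact le_antisymm (iSup_le fun e => Pcomp_le_P F e) (P_le_iSup F)
  · intro e hne
    have he : e ≠ (0, 0) := fun h => hne (by rw [h]; exact Pcomp_bot F)
    rw [Pcomp_eq F e he]
    exact finrank_span_singleton ((wvec_li F).ne_zero e)
  · rw [hspan, finrank_span_eq_card ((wvec_li F).comp Subtype.val Subtype.val_injective)]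
    have hcard : Fintype.card {e : ZMod 2 × (Fin q → ZMod 2 × ZMod 2) // e ≠ (0, 0)}
        = 2 * 4 ^ q - 1 := by
      rw [Fintype.card_subtype_compl, Fintype.card_subtype_eq]
      simp [Fintype.card_prod, Fintype.card_fun]
    rw [hcard, show (2 ^ q) ^ 2 = 4 ^ q by
      rw [← pow_mul, mul_comm, pow_mul]; norm_num]

end PauliGradingAux

/-- `P(t)` (for `t = 2^q`) is the internal direct sum of the one-dimensional
homogeneous components of the Pauli grading; in particular `dim P(t) = 2t² − 1`. -/
theorem Pt_pauli_grading (F : Type*) [Field F] [CharZero F] (q : ℕ) (hq : 1 ≤ q) :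
    iSupIndep (Pcomponent F q) ∧
    (⨆ e, Pcomponent F q e) = Psubmodule F (2 ^ q) ∧
    (∀ e, Pcomponent F q e ≠ ⊥ → Module.finrank F (Pcomponent F q e) = 1) ∧
    Module.finrank F (Psubmodule F (2 ^ q)) = 2 * (2 ^ q) ^ 2 - 1 := by
  exact Pt_pauli_grading_aux F (q := q) hq
end

section
/- Let F be a field of characteristic 0 and q ≥ 1. For all g, h : Fin q → ZMod 2 × ZMod 2, the matrix c_g · c_h + c_h · c_gᵀ is either the zero matrix or an invertible matrix in M_{2^q}(F). -/
open Matrix Kronecker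

lemma sigmaP_mul (F : Type*) [Field F] (u v : ZMod 2 × ZMod 2) :
    ∃ ε : F, (ε = 1 ∨ ε = -1) ∧ sigmaP F u * sigmaP F v = ε • sigmaP F (u + v) := by
  have h2 : ∀ x : ZMod 2, x = 0 ∨ x = 1 := by decide
  obtain ⟨u1, u2⟩ := u
  obtain ⟨v1, v2⟩ := v
  rcases h2 u1 with rfl | rfl <;> rcases h2 u2 with rfl | rfl <;>
    rcases h2 v1 with rfl | rfl <;> rcases h2 v2 with rfl | rfl <;>
  first
  | (refine ⟨1, Or.inl rfl, ?_⟩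
     ext i j; fin_cases i <;> fin_cases j <;>
       simp (config := {decide := true}) [sigmaP, Matrix.mul_apply, Fin.sum_univ_two]
     done)
  | (refine ⟨-1, Or.inr rfl, ?_⟩
     ext i j; fin_cases i <;> fin_cases j <;>
       simp (config := {decide := true}) [sigmaP, Matrix.mul_apply, Fin.sum_univ_two]
     done)

lemma sigmaP_transpose (F : Type*) [Field F] (u : ZMod 2 × ZMod 2) :
    ∃ ε : F, (ε = 1 ∨ ε = -1) ∧ (sigmaP F u)ᵀ = ε • sigmaP F u := by
  have h2 : ∀ x : ZMod 2, x = 0 ∨ x = 1 := by decide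
  obtain ⟨u1, u2⟩ := u
  rcases h2 u1 with rfl | rfl <;> rcases h2 u2 with rfl | rfl <;>
  first
  | (refine ⟨1, Or.inl rfl, ?_⟩
     ext i j; fin_cases i <;> fin_cases j <;>
       simp (config := {decide := true}) [sigmaP, Matrix.transpose_apply]
     done)
  | (refine ⟨-1, Or.inr rfl, ?_⟩
     ext i j; fin_cases i <;> fin_cases j <;>
       simp (config := {decide := true}) [sigmaP, Matrix.transpose_apply]
     done)

lemma sigmaP_zero (F : Type*) [Field F] : sigmaP F (0, 0) = 1 := by
  ext i j; fin_cases i <;> fin_cases j <;>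
    simp (config := {decide := true}) [sigmaP, Matrix.one_apply]

lemma pauliKron_zero (F : Type*) [Field F] (q : ℕ) :
    pauliKron F (0 : Fin q → ZMod 2 × ZMod 2) = 1 := by
  induction q with
  | zero => rfl
  | succ q ih =>
    show Matrix.reindex _ _ (Matrix.kroneckerMap (· * ·)
        (pauliKron F (fun i => (0 : Fin (q+1) → ZMod 2 × ZMod 2) i.castSucc))
        (sigmaP F ((0 : Fin (q+1) → ZMod 2 × ZMod 2) (Fin.last q)))) = 1
    have h1 : (fun i : Fin q => (0 : Fin (q+1) → ZMod 2 × ZMod 2) i.castSucc)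
        = (0 : Fin q → ZMod 2 × ZMod 2) := rfl
    have h2 : ((0 : Fin (q+1) → ZMod 2 × ZMod 2) (Fin.last q)) = ((0,0) : ZMod 2 × ZMod 2) := rfl
    rw [h1, h2, ih, sigmaP_zero, Matrix.one_kronecker_one, Matrix.reindex_apply,
      Matrix.submatrix_one_equiv]

lemma pauliKron_mul (F : Type*) [Field F] {q : ℕ} (g h : Fin q → ZMod 2 × ZMod 2) :
    ∃ ε : F, (ε = 1 ∨ ε = -1) ∧
      pauliKron F g * pauliKron F h = ε • pauliKron F (g + h) := by
  induction q with
  | zero => exact ⟨1, Or.inl rfl, by show (1 : Matrix (Fin 1) (Fin 1) F) * 1 = (1:F) • 1; simp⟩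
  | succ q ih =>
    obtain ⟨ε₁, hε₁, h1⟩ := ih (fun i => g i.castSucc) (fun i => h i.castSucc)
    obtain ⟨ε₂, hε₂, h2⟩ := sigmaP_mul F (g (Fin.last q)) (h (Fin.last q))
    refine ⟨ε₁ * ε₂, by rcases hε₁ with rfl|rfl <;> rcases hε₂ with rfl|rfl <;> norm_num, ?_⟩
    have ha : (fun i : Fin q => (g + h) i.castSucc)
        = (fun i => g i.castSucc) + (fun i => h i.castSucc) := rfl
    have hb : (g + h) (Fin.last q) = g (Fin.last q) + h (Fin.last q) := rfl
    show Matrix.reindex _ _ _ * Matrix.reindex _ _ _ =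
      (ε₁ * ε₂) • Matrix.reindex _ _ (Matrix.kroneckerMap (· * ·)
        (pauliKron F (fun i => (g + h) i.castSucc)) (sigmaP F ((g + h) (Fin.last q))))
    rw [ha, hb, Matrix.reindex_apply, Matrix.reindex_apply, Matrix.reindex_apply,
      Matrix.submatrix_mul_equiv, ← Matrix.mul_kronecker_mul, h1, h2,
      Matrix.smul_kronecker, Matrix.kronecker_smul, Matrix.submatrix_smul,
      Matrix.submatrix_smul, smul_smul]
    rfl

lemma pauliKron_transpose (F : Type*) [Field F] {q : ℕ} (g : Fin q → ZMod 2 × ZMod 2) :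
    ∃ ε : F, (ε = 1 ∨ ε = -1) ∧ (pauliKron F g)ᵀ = ε • pauliKron F g := by
  induction q with
  | zero => exact ⟨1, Or.inl rfl, by show (1 : Matrix (Fin 1) (Fin 1) F)ᵀ = (1:F) • 1; simp⟩
  | succ q ih =>
    obtain ⟨ε₁, hε₁, h1⟩ := ih (fun i => g i.castSucc)
    obtain ⟨ε₂, hε₂, h2⟩ := sigmaP_transpose F (g (Fin.last q))
    refine ⟨ε₁ * ε₂, by rcases hε₁ with rfl|rfl <;> rcases hε₂ with rfl|rfl <;> norm_num, ?_⟩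
    show (Matrix.reindex _ _ (Matrix.kroneckerMap (· * ·)
        (pauliKron F (fun i => g i.castSucc)) (sigmaP F (g (Fin.last q)))))ᵀ = _
    rw [Matrix.reindex_apply, Matrix.transpose_submatrix, ← Matrix.kroneckerMap_transpose,
      h1, h2, Matrix.smul_kronecker, Matrix.kronecker_smul, Matrix.submatrix_smul,
      Matrix.submatrix_smul, smul_smul]
    rfl

lemma pauliKron_isUnit (F : Type*) [Field F] [CharZero F] {q : ℕ}
    (g : Fin q → ZMod 2 × ZMod 2) : IsUnit (pauliKron F g) := by
  obtain ⟨ε, hε, h1⟩ := pauliKron_mul F g g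
  have hgg : g + g = 0 := by
    funext i
    have : ∀ y : ZMod 2 × ZMod 2, y + y = 0 := by decide
    exact this _
  rw [hgg, pauliKron_zero] at h1
  have hεne : ε ≠ 0 := by rcases hε with rfl|rfl <;> norm_num
  refine (Matrix.isUnit_iff_isUnit_det _).mpr (Matrix.isUnit_det_of_right_inverse (B := ε⁻¹ • pauliKron F g) ?_)
  rw [Matrix.mul_smul, h1, smul_smul, inv_mul_cancel₀ hεne, one_smul]

/-- The "super-anticommutator-type" expression `c_g·c_h + c_h·c_gᵀ` is either zero or
invertible in `M_{2^q}(F)`. -/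
theorem pauliKron_anticomm_zero_or_isUnit (F : Type*) [Field F] [CharZero F]
    (q : ℕ) (hq : 1 ≤ q) (g h : Fin q → ZMod 2 × ZMod 2) :
    pauliKron F g * pauliKron F h + pauliKron F h * (pauliKron F g)ᵀ = 0 ∨
    IsUnit (pauliKron F g * pauliKron F h + pauliKron F h * (pauliKron F g)ᵀ) := by
  obtain ⟨ε₁, hε₁, h1⟩ := pauliKron_mul F g h
  obtain ⟨ε₂, hε₂, h2⟩ := pauliKron_mul F h g
  obtain ⟨ε₃, hε₃, h3⟩ := pauliKron_transpose F g
  have key : pauliKron F g * pauliKron F h + pauliKron F h * (pauliKron F g)ᵀ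
      = (ε₁ + ε₂ * ε₃) • pauliKron F (g + h) := by
    rw [h1, h3, Matrix.mul_smul, h2, add_comm h g, smul_smul, add_smul, mul_comm ε₂ ε₃]
  rw [key]
  by_cases ha : ε₁ + ε₂ * ε₃ = 0
  · left; rw [ha, zero_smul]
  · right
    have hc := pauliKron_isUnit F (g + h)
    rw [Matrix.isUnit_iff_isUnit_det] at hc ⊢
    rw [Matrix.det_smul, isUnit_iff_ne_zero]
    exact mul_ne_zero (pow_ne_zero _ ha) (isUnit_iff_ne_zero.mp hc)
end
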